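/- The function α ↦ 1 + 1/((α-1)(1 - (1 + √(1 - 2/α))^{-1})) is strictly decreasing on (2, ∞). -/
import Mathlib


open Real Set

theorem pareto_bound_strictAnti :
    StrictAntiOn (fun α : ℝ => 1 + 1 / ((α - 1) * (1 - (1 + Real.sqrt (1 - 2 / α))⁻¹)))
      (Set.Ioi (2 : ℝ)) := by
  intro a ha b hb hab
  simp only [Set.mem_Ioi] at ha hb
  have ha0 : (0:ℝ) < a := by linarith
  have hb0 : (0:ℝ) < b := by linarith
  set sa := Real.sqrt (1 - 2 / a) with hsadef
  set sb := Real.sqrt (1 - 2 / b) with hsbdef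
  have hsa : 0 < sa := Real.sqrt_pos.2 (by rw [sub_pos, div_lt_one ha0]; linarith)
  have hsb : 0 < sb := Real.sqrt_pos.2 (by rw [sub_pos, div_lt_one hb0]; linarith)
  have hslt : sa < sb := by
    apply Real.sqrt_lt_sqrt
    · rw [sub_nonneg, div_le_one ha0]; linarith
    · have : 2 / b < 2 / a := by
        apply div_lt_div_of_pos_left <;> linarith
      linarith
  have hta : 0 < 1 - (1 + sa)⁻¹ := by
    have h1 : (1 + sa)⁻¹ < 1 := inv_lt_one_of_one_lt₀ (by linarith)
    linarith
  have htab : 1 - (1 + sa)⁻¹ < 1 - (1 + sb)⁻¹ := by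
    have : (1 + sb)⁻¹ < (1 + sa)⁻¹ := by
      apply inv_strictAnti₀ <;> linarith
    linarith
  have hga : 0 < (a - 1) * (1 - (1 + sa)⁻¹) := mul_pos (by linarith) hta
  have hgab : (a - 1) * (1 - (1 + sa)⁻¹) < (b - 1) * (1 - (1 + sb)⁻¹) := by
    calc (a - 1) * (1 - (1 + sa)⁻¹) < (b - 1) * (1 - (1 + sa)⁻¹) := by
          apply mul_lt_mul_of_pos_right (by linarith) hta
      _ < (b - 1) * (1 - (1 + sb)⁻¹) := by
          apply mul_lt_mul_of_pos_left htab (by linarith)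
  have := one_div_lt_one_div_of_lt hga hgab
  simp only []
  linarith
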